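/- Suppose A ∈ ℝ_max^{n×n} satisfies the transient condition A^{⊗(k+c)} = λc ⊗ A^{⊗k} for all k ≥ k_0 (with λ ∈ ℝ, c ≥ 1). If λ < α, then for every x ∈ ℝ^n and every l ≥ 0 there exists k ≥ l such that [A^{⊗(k+1)} ⊗ x]_i − [A^{⊗k} ⊗ x]_i < α; i.e., the specification 'eventually always t_i ≥ α' fails along every orbit. -/

import Mathlib

noncomputable def mpMul {n : ℕ} (A B : Fin n → Fin n → WithBot ℝ) :
    Fin n → Fin n → WithBot ℝ :=
  fun i j => Finset.univ.sup (fun k => A i k + B k j)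

/-- Max-plus power: `A^{⊗0}` is the max-plus identity, `A^{⊗(k+1)} = A ⊗ A^{⊗k}`. -/
noncomputable def mpPow {n : ℕ} (A : Fin n → Fin n → WithBot ℝ) : ℕ → Fin n → Fin n → WithBot ℝ
  | 0 => fun i j => if i = j then (0 : WithBot ℝ) else ⊥
  | k + 1 => mpMul A (mpPow A k)

noncomputable def mpApp {n : ℕ} (A : Fin n → Fin n → WithBot ℝ) (x : Fin n → ℝ) :
    Fin n → WithBot ℝ :=
  fun i => Finset.univ.sup (fun j => A i j + (x j : WithBot ℝ))

def MPRegular {n : ℕ} (A : Fin n → Fin n → WithBot ℝ) : Prop :=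
  ∀ i, ∃ j, A i j ≠ ⊥

lemma add_finset_sup {β : Type*} (r : ℝ) (s : Finset β) (f : β → WithBot ℝ) :
    (r : WithBot ℝ) + s.sup f = s.sup (fun b => (r : WithBot ℝ) + f b) := by
  have hmono : Monotone (fun z : WithBot ℝ => (r : WithBot ℝ) + z) :=
    fun a b h => add_le_add_right h _
  exact Finset.comp_sup_eq_sup_comp (fun z : WithBot ℝ => (r : WithBot ℝ) + z)
    (fun x y => hmono.map_sup x y) (by simp)

/-- If `λ < α`, the specification "eventually always `t_i ≥ α`" fails along every orbit:
    for every `x` and every `l` there is `k ≥ l` with `x_i(k+1) − x_i(k) < α`. -/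
theorem eventually_always_ge_fails {n : ℕ} (A : Fin n → Fin n → WithBot ℝ)
    (hA : MPRegular A) (lam α : ℝ) (k₀ c : ℕ) (hc : 1 ≤ c) (hlam : lam < α)
    (htrans : ∀ k ≥ k₀, ∀ i j, mpPow A (k + c) i j = ((c * lam : ℝ) : WithBot ℝ) + mpPow A k i j)
    (i : Fin n) :
    ∀ x : Fin n → ℝ, ∀ y : ℕ → Fin n → ℝ,
      (∀ k j, mpApp (mpPow A k) x j = ((y k j : ℝ) : WithBot ℝ)) →
      ∀ l : ℕ, ∃ k ≥ l, y (k + 1) i - y k i < α := by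
  intro x y hy l
  -- Step 1: for k ≥ k₀, y (k+c) j = c*lam + y k j
  have hstep : ∀ k ≥ k₀, ∀ j, y (k + c) j = c * lam + y k j := by
    intro k hk j
    have happ : mpApp (mpPow A (k + c)) x j
        = ((c * lam : ℝ) : WithBot ℝ) + mpApp (mpPow A k) x j := by
      unfold mpApp
      rw [add_finset_sup]
      apply Finset.sup_congr rfl
      intro m _
      rw [htrans k hk j m, add_assoc]
    rw [hy (k + c) j, hy k j] at happ
    have : ((y (k + c) j : ℝ) : WithBot ℝ) = ((c * lam + y k j : ℝ) : WithBot ℝ) := by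
      rw [happ]; push_cast; ring
    exact_mod_cast this
  -- Step 2: contradiction argument
  by_contra hcon
  push_neg at hcon
  set K := max l k₀ with hK
  have hgrow : ∀ m : ℕ, y K i + m * α ≤ y (K + m) i := by
    intro m
    induction m with
    | zero => simp
    | succ m ih =>
      have h1 : α ≤ y (K + m + 1) i - y (K + m) i :=
        hcon (K + m) (le_trans (le_max_left l k₀) (Nat.le_add_right _ _))
      push_cast
      have : y K i + m * α + α ≤ y (K + m) i + α := by linarith
      calc y K i + (m + 1) * α = y K i + m * α + α := by ring
        _ ≤ y (K + m) i + α := by linarith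
        _ ≤ y (K + m + 1) i := by linarith
  have hc' : y (K + c) i = c * lam + y K i := hstep K (le_max_right l k₀) i
  have h2 := hgrow c
  rw [hc'] at h2
  have hcpos : (0 : ℝ) < c := by exact_mod_cast hc
  nlinarith [hcpos, hlam]
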